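/- For every integer m ≥ 1 and each ε ∈ {1, −1}, −𝐬(1,4m) + (1/(4m))·(4m² + 2m) ≠ ε·( −(1/12)·( −((4m+1)/m)·(1/(4m+1)² − 1/2) − m/(4m+1) + 3 + 12·𝐬(m,4m+1) ) ). -/

import Mathlib

open Classical in
/-- The sawtooth function `((x))`: `x - ⌊x⌋ - 1/2` if `x` is not an integer, `0` otherwise. -/
noncomputable def sawtooth (x : ℝ) : ℝ :=
  if ∃ n : ℤ, x = (n : ℝ) then 0 else x - ⌊x⌋ - 1 / 2

/-- The Dedekind sum `𝐬(q,p) = Σ_{i=1}^{p-1} ((i/p))·((iq/p))`. -/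
noncomputable def dedekindSum (q p : ℤ) : ℝ :=
  ∑ i ∈ Finset.Icc (1 : ℤ) (p - 1), sawtooth ((i : ℝ) / (p : ℝ)) * sawtooth ((i : ℝ) * (q : ℝ) / (p : ℝ))

lemma Icc_int_succ (n : ℤ) (hn : 0 ≤ n) :
    Finset.Icc (1:ℤ) (n+1) = insert (n+1) (Finset.Icc 1 n) := by
  ext x; simp only [Finset.mem_Icc, Finset.mem_insert]; omega

lemma sum_Icc_one (f : ℤ → ℝ) (N : ℕ) :
    ∑ i ∈ Finset.Icc (1:ℤ) (N:ℤ), f i = ∑ i ∈ Finset.range N, f ((i:ℤ)+1) := by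
  induction N with
  | zero => simp
  | succ n ih =>
      have h : ((n+1 : ℕ) : ℤ) = (n:ℤ)+1 := by push_cast; ring
      rw [h, Icc_int_succ (n:ℤ) (by positivity), Finset.sum_insert (by simp),
        Finset.sum_range_succ, ih]
      ring

lemma sawtooth_eval (q r p : ℤ) (h0 : 0 < r) (hrp : r < p) (x : ℝ)
    (hx : x = ((q:ℝ)*(p:ℝ) + (r:ℝ))/(p:ℝ)) :
    sawtooth x = (r:ℝ)/(p:ℝ) - 1/2 := by
  have hp : (0:ℤ) < p := h0.trans hrp
  have hpR : (0:ℝ) < (p:ℝ) := by exact_mod_cast hp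
  have hrR : (0:ℝ) < (r:ℝ) := by exact_mod_cast h0
  have hrpR : (r:ℝ) < (p:ℝ) := by exact_mod_cast hrp
  have hxval : x = (q:ℝ) + (r:ℝ)/(p:ℝ) := by rw [hx]; field_simp
  have h01 : 0 < (r:ℝ)/(p:ℝ) := by positivity
  have h1' : (r:ℝ)/(p:ℝ) < 1 := (div_lt_one hpR).2 hrpR
  have hni : ¬ ∃ n : ℤ, x = (n:ℝ) := by
    rintro ⟨n, hn⟩
    have h2 : (r:ℝ) = ((n:ℝ) - (q:ℝ)) * (p:ℝ) := by
      rw [hxval] at hn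
      field_simp at hn
      linarith
    have h3 : r = (n - q) * p := by exact_mod_cast h2
    rcases le_or_gt (n - q) 0 with hc | hc
    · nlinarith [h3, hp, h0]
    · have : 1 ≤ n - q := hc
      nlinarith [h3, hp, hrp]
  have hfloor : ⌊x⌋ = q := by
    rw [Int.floor_eq_iff]
    constructor
    · rw [hxval]; linarith
    · rw [hxval]; linarith
  unfold sawtooth
  rw [if_neg hni, hfloor, hxval]
  ring

lemma sum_sq (P : ℝ) (N : ℕ) :
    ∑ i ∈ Finset.range N, (((i:ℝ)+1)/P - 1/2)^2
      = (N:ℝ)*((N:ℝ)+1)*(2*(N:ℝ)+1)/(6*P^2) - (N:ℝ)*((N:ℝ)+1)/(2*P) + (N:ℝ)/4 := by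
  induction N with
  | zero => simp
  | succ n ih => rw [Finset.sum_range_succ, ih]; push_cast; ring

lemma sum_range_four (g : ℕ → ℝ) (n : ℕ) :
    ∑ i ∈ Finset.range (4*n), g i
      = ∑ j ∈ Finset.range n, (g (4*j) + g (4*j+1) + g (4*j+2) + g (4*j+3)) := by
  induction n with
  | zero => simp
  | succ k ih =>
      have h : 4*(k+1) = (4*k)+1+1+1+1 := by ring
      rw [h, Finset.sum_range_succ, Finset.sum_range_succ, Finset.sum_range_succ,
        Finset.sum_range_succ, ih, Finset.sum_range_succ]
      ring

lemma sum_T (c P : ℝ) (n : ℕ) :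
    ∑ j ∈ Finset.range n,
      ( ((4*(j:ℝ)+1)/P - 1/2) * ((c - (j:ℝ))/P - 1/2)
      + ((4*(j:ℝ)+2)/P - 1/2) * ((2*c - (j:ℝ))/P - 1/2)
      + ((4*(j:ℝ)+3)/P - 1/2) * ((3*c - (j:ℝ))/P - 1/2)
      + ((4*(j:ℝ)+4)/P - 1/2) * ((4*c - (j:ℝ))/P - 1/2) )
    = (-16*((n:ℝ)*((n:ℝ)-1)*(2*(n:ℝ)-1)/6) + (40*c-10)*((n:ℝ)*((n:ℝ)-1)/2) + 30*c*(n:ℝ))/P^2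
      - (12*((n:ℝ)*((n:ℝ)-1)/2) + (10*c+10)*(n:ℝ))/(2*P) + (n:ℝ) := by
  induction n with
  | zero => simp
  | succ k ih => rw [Finset.sum_range_succ, ih]; push_cast; ring

lemma dedekind_one (M : ℕ) (hM : 1 ≤ M) :
    dedekindSum 1 (4*(M:ℤ)) = (4*(M:ℝ)-1)*(4*(M:ℝ)-2)/(48*(M:ℝ)) := by
  unfold dedekindSum
  have hMR : (1:ℝ) ≤ (M:ℝ) := by exact_mod_cast hM
  have h1 : (4*(M:ℤ)) - 1 = ((4*M-1 : ℕ):ℤ) := by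
    have : 1 ≤ 4*M := by omega
    push_cast [this]; ring
  rw [h1, sum_Icc_one]
  have step : ∀ i ∈ Finset.range (4*M-1),
      sawtooth (((((i:ℤ)+1 : ℤ)):ℝ) / ((4*(M:ℤ) : ℤ):ℝ)) *
        sawtooth (((((i:ℤ)+1 : ℤ)):ℝ) * ((1:ℤ):ℝ) / ((4*(M:ℤ) : ℤ):ℝ))
      = (((i:ℝ)+1)/(4*(M:ℝ)) - 1/2)^2 := by
    intro i hi
    simp only [Finset.mem_range] at hi
    have hb1 : (0:ℤ) < (i:ℤ)+1 := by positivity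
    have hb2 : ((i:ℤ)+1) < 4*(M:ℤ) := by omega
    rw [sawtooth_eval 0 ((i:ℤ)+1) (4*(M:ℤ)) hb1 hb2 _ (by push_cast; ring),
        sawtooth_eval 0 ((i:ℤ)+1) (4*(M:ℤ)) hb1 hb2 _ (by push_cast; ring)]
    push_cast; ring
  rw [Finset.sum_congr rfl step, sum_sq]
  have hc : ((4*M-1 : ℕ):ℝ) = 4*(M:ℝ) - 1 := by
    have : 1 ≤ 4*M := by omega
    push_cast [this]; ring
  rw [hc]
  have hM0 : (M:ℝ) ≠ 0 := by positivity
  field_simp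
  ring

lemma dedekind_m (M : ℕ) (hM : 1 ≤ M) :
    dedekindSum (M:ℤ) (4*(M:ℤ)+1) = (M:ℝ)*(4-(M:ℝ))/(3*(4*(M:ℝ)+1)) := by
  unfold dedekindSum
  have h1 : (4*(M:ℤ)+1) - 1 = ((4*M : ℕ):ℤ) := by push_cast; ring
  rw [h1, sum_Icc_one, sum_range_four]
  have hMZ : (1:ℤ) ≤ (M:ℤ) := by exact_mod_cast hM
  have e1 : ∀ i : ℕ, (i:ℤ) + 1 < 4*(M:ℤ)+1 →
      sawtooth (((((i:ℕ):ℤ)+1 : ℤ):ℝ) / ((4*(M:ℤ)+1 : ℤ):ℝ))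
        = ((i:ℝ)+1)/(4*(M:ℝ)+1) - 1/2 := by
    intro i hi
    rw [sawtooth_eval 0 ((i:ℤ)+1) (4*(M:ℤ)+1) (by positivity) hi _ (by push_cast; ring)]
    push_cast; ring
  have e2 : ∀ (i : ℕ) (q r : ℤ), 0 < r → r < 4*(M:ℤ)+1 →
      ((i:ℤ)+1)*(M:ℤ) = q*(4*(M:ℤ)+1)+r →
      sawtooth (((((i:ℕ):ℤ)+1 : ℤ):ℝ) * (((M:ℕ):ℤ):ℝ) / ((4*(M:ℤ)+1 : ℤ):ℝ))
        = (r:ℝ)/(4*(M:ℝ)+1) - 1/2 := by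
    intro i q r h0 hrp hid
    have hidR : ((i:ℝ)+1)*(M:ℝ) = (q:ℝ)*(4*(M:ℝ)+1) + (r:ℝ) := by exact_mod_cast hid
    rw [sawtooth_eval q r (4*(M:ℤ)+1) h0 hrp _ (by push_cast; rw [hidR])]
    push_cast; ring
  have step : ∀ j ∈ Finset.range M,
      ( sawtooth ((((((4*j:ℕ):ℤ)+1 : ℤ)):ℝ) / ((4*(M:ℤ)+1 : ℤ):ℝ)) *
          sawtooth ((((((4*j:ℕ):ℤ)+1 : ℤ)):ℝ) * (((M:ℕ):ℤ):ℝ) / ((4*(M:ℤ)+1 : ℤ):ℝ))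
      + sawtooth ((((((4*j+1:ℕ):ℤ)+1 : ℤ)):ℝ) / ((4*(M:ℤ)+1 : ℤ):ℝ)) *
          sawtooth ((((((4*j+1:ℕ):ℤ)+1 : ℤ)):ℝ) * (((M:ℕ):ℤ):ℝ) / ((4*(M:ℤ)+1 : ℤ):ℝ))
      + sawtooth ((((((4*j+2:ℕ):ℤ)+1 : ℤ)):ℝ) / ((4*(M:ℤ)+1 : ℤ):ℝ)) *
          sawtooth ((((((4*j+2:ℕ):ℤ)+1 : ℤ)):ℝ) * (((M:ℕ):ℤ):ℝ) / ((4*(M:ℤ)+1 : ℤ):ℝ))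
      + sawtooth ((((((4*j+3:ℕ):ℤ)+1 : ℤ)):ℝ) / ((4*(M:ℤ)+1 : ℤ):ℝ)) *
          sawtooth ((((((4*j+3:ℕ):ℤ)+1 : ℤ)):ℝ) * (((M:ℕ):ℤ):ℝ) / ((4*(M:ℤ)+1 : ℤ):ℝ)) )
      = ( ((4*(j:ℝ)+1)/(4*(M:ℝ)+1) - 1/2) * (((M:ℝ) - (j:ℝ))/(4*(M:ℝ)+1) - 1/2)
        + ((4*(j:ℝ)+2)/(4*(M:ℝ)+1) - 1/2) * ((2*(M:ℝ) - (j:ℝ))/(4*(M:ℝ)+1) - 1/2)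
        + ((4*(j:ℝ)+3)/(4*(M:ℝ)+1) - 1/2) * ((3*(M:ℝ) - (j:ℝ))/(4*(M:ℝ)+1) - 1/2)
        + ((4*(j:ℝ)+4)/(4*(M:ℝ)+1) - 1/2) * ((4*(M:ℝ) - (j:ℝ))/(4*(M:ℝ)+1) - 1/2) ) := by
    intro j hj
    simp only [Finset.mem_range] at hj
    have hjZ : (j:ℤ) < (M:ℤ) := by exact_mod_cast hj
    rw [e1 (4*j) (by push_cast; omega), e1 (4*j+1) (by push_cast; omega),
        e1 (4*j+2) (by push_cast; omega), e1 (4*j+3) (by push_cast; omega),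
        e2 (4*j) (j:ℤ) ((M:ℤ) - (j:ℤ)) (by omega) (by omega) (by push_cast; ring),
        e2 (4*j+1) (j:ℤ) (2*(M:ℤ) - (j:ℤ)) (by omega) (by omega) (by push_cast; ring),
        e2 (4*j+2) (j:ℤ) (3*(M:ℤ) - (j:ℤ)) (by omega) (by omega) (by push_cast; ring),
        e2 (4*j+3) (j:ℤ) (4*(M:ℤ) - (j:ℤ)) (by omega) (by omega) (by push_cast; ring)]
    push_cast; ring
  rw [Finset.sum_congr rfl step, sum_T]
  have hp : (4*(M:ℝ)+1) ≠ 0 := by positivity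
  field_simp
  ring

/-- Key computational step in the proof of Theorem 1.3: for every `m ≥ 1` and `ε ∈ {1, −1}`,
`λ(S³_K(4m)) = −𝐬(1,4m) + (1/(4m))·(4m² + 2m)` differs from `ε·λ(−P(4m+1,m))`. -/
theorem stmt_5 (m : ℤ) (hm : 1 ≤ m) (ε : ℝ) (hε : ε = 1 ∨ ε = -1) :
    -dedekindSum 1 (4 * m) + (1 / (4 * (m : ℝ))) * (4 * (m : ℝ) ^ 2 + 2 * (m : ℝ)) ≠
      ε * (-(1 / 12) * (-((4 * (m : ℝ) + 1) / (m : ℝ)) * (1 / (4 * (m : ℝ) + 1) ^ 2 - 1 / 2)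
        - (m : ℝ) / (4 * (m : ℝ) + 1) + 3 + 12 * dedekindSum m (4 * m + 1))) := by
  obtain ⟨M, rfl⟩ : ∃ M : ℕ, m = (M:ℤ) := ⟨m.toNat, by omega⟩
  have hM : 1 ≤ M := by exact_mod_cast hm
  rw [dedekind_one M hM, dedekind_m M hM]
  push_cast
  have hx : (1:ℝ) ≤ (M:ℝ) := by exact_mod_cast hM
  have hx0 : (0:ℝ) < (M:ℝ) := by linarith
  have hp0 : (0:ℝ) < 4*(M:ℝ)+1 := by linarith
  rcases hε with rfl | rfl
  · intro h
    rw [← sub_eq_zero] at h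
    have key : (28*(M:ℝ)^3+79*(M:ℝ)^2+14*(M:ℝ)-1)/(12*(M:ℝ)*(4*(M:ℝ)+1)) = 0 := by
      rw [← h]; field_simp; ring
    have hnum : 0 < 28*(M:ℝ)^3+79*(M:ℝ)^2+14*(M:ℝ)-1 := by nlinarith
    have hpos := div_pos hnum (by positivity : (0:ℝ) < 12*(M:ℝ)*(4*(M:ℝ)+1))
    rw [key] at hpos
    exact lt_irrefl _ hpos
  · intro h
    rw [← sub_eq_zero] at h
    have key : (3*(M:ℝ)/4) = 0 := by
      rw [← h]; field_simp; ring
    have hpos : (0:ℝ) < 3*(M:ℝ)/4 := by positivity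
    rw [key] at hpos
    exact lt_irrefl _ hpos
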